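/- arXiv:2312.10283 — 3 statements merged into one kernel-verified Lean document; each statement's English description precedes it below -/
import Mathlib

section
/- Let $M_c(s) = f_0 + g^T s + \tfrac12 s^T H s + \tfrac{\beta}{6}\|s\|^3 + \tfrac{\sigma_c}{4}\|s\|^4$ with $\sigma_c > 0$ and let $s_c$ satisfy $(H + \tfrac{\beta}{2}\|s_c\| I + \sigma_c\|s_c\|^2 I)s_c = -g$ and $H + \tfrac{\beta}{2}\|s_c\| I + \sigma_c\|s_c\|^2 I \succeq 0$. Then $M_c(0) - M_c(s_c) \ge \tfrac{\beta}{12}\|s_c\|^3 + \tfrac{\sigma_c}{4}\|s_c\|^4$. -/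
open Matrix

noncomputable def euclNorm {n : ℕ} (v : Fin n → ℝ) : ℝ := Real.sqrt (v ⬝ᵥ v)

noncomputable def Mc {n : ℕ} (f0 : ℝ) (g : Fin n → ℝ) (H : Matrix (Fin n) (Fin n) ℝ)
    (β σc : ℝ) (s : Fin n → ℝ) : ℝ :=
  f0 + g ⬝ᵥ s + (1 / 2) * (s ⬝ᵥ H.mulVec s) + (β / 6) * (euclNorm s) ^ 3
    + (σc / 4) * (euclNorm s) ^ 4

theorem stmt_11 {n : ℕ} (f0 : ℝ) (g : Fin n → ℝ) (H : Matrix (Fin n) (Fin n) ℝ)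
    (β σc : ℝ) (hH : H.IsSymm) (hσ : 0 < σc)
    (sc : Fin n → ℝ)
    (hstat : (H + ((β / 2) * euclNorm sc) • (1 : Matrix (Fin n) (Fin n) ℝ)
        + (σc * (euclNorm sc) ^ 2) • (1 : Matrix (Fin n) (Fin n) ℝ)).mulVec sc = -g)
    (hpsd : ∀ w : Fin n → ℝ,
      0 ≤ w ⬝ᵥ (H + ((β / 2) * euclNorm sc) • (1 : Matrix (Fin n) (Fin n) ℝ)
        + (σc * (euclNorm sc) ^ 2) • (1 : Matrix (Fin n) (Fin n) ℝ)).mulVec w) :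
    (β / 12) * (euclNorm sc) ^ 3 + (σc / 4) * (euclNorm sc) ^ 4
      ≤ Mc f0 g H β σc 0 - Mc f0 g H β σc sc := by
  set r := euclNorm sc with hr
  have hdnn : (0:ℝ) ≤ sc ⬝ᵥ sc := by
    apply Finset.sum_nonneg
    intro i _
    exact mul_self_nonneg _
  have hr2 : r ^ 2 = sc ⬝ᵥ sc := Real.sq_sqrt hdnn
  have hexp : ∀ w : Fin n → ℝ,
      w ⬝ᵥ (H + ((β / 2) * r) • (1 : Matrix (Fin n) (Fin n) ℝ)
        + (σc * r ^ 2) • (1 : Matrix (Fin n) (Fin n) ℝ)).mulVec w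
      = w ⬝ᵥ H.mulVec w + ((β / 2) * r) * (w ⬝ᵥ w) + (σc * r ^ 2) * (w ⬝ᵥ w) := by
    intro w
    simp [add_mulVec, smul_mulVec, one_mulVec, dotProduct_add, dotProduct_smul,
      smul_eq_mul]
  have hkey : sc ⬝ᵥ H.mulVec sc + ((β / 2) * r) * (r ^ 2) + (σc * r ^ 2) * (r ^ 2)
      = -(g ⬝ᵥ sc) := by
    have := congrArg (fun v => sc ⬝ᵥ v) hstat
    rw [hexp sc, ← hr2] at this
    rw [this, dotProduct_neg, dotProduct_comm]
  have hpsd' := hpsd sc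
  rw [hexp sc, ← hr2] at hpsd'
  have h0 : euclNorm (0 : Fin n → ℝ) = 0 := by
    simp [euclNorm]
  simp only [Mc, h0, dotProduct_zero, zero_dotProduct, Matrix.mulVec_zero]
  nlinarith [hpsd', hkey]
end

section
/- Let $M_c(s) = f_0 + g^T s + \tfrac12 s^T H s + \tfrac{\beta}{6}\|s\|^3 + \tfrac{\sigma_c}{4}\|s\|^4$ with $\sigma_c > 0$, and suppose $s_c \neq 0$ satisfies both the stationarity equation $(H + \tfrac{\beta}{2}\|s_c\| I + \sigma_c\|s_c\|^2 I)s_c = -g$ and the second-order inequality $s_c^T H s_c + \beta\|s_c\|^3 + 3\sigma_c\|s_c\|^4 \ge 0$. Then $M_c(0) - M_c(s_c) \ge -\tfrac{\beta}{6}\|s_c\|^3 - \tfrac{3}{4}\sigma_c\|s_c\|^4$. -/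
open Matrix

lemma euclNorm_sq {n : ℕ} (v : Fin n → ℝ) : (euclNorm v) ^ 2 = v ⬝ᵥ v := by
  have h : (0:ℝ) ≤ v ⬝ᵥ v := by
    unfold dotProduct
    exact Finset.sum_nonneg fun i _ => mul_self_nonneg _
  simp [euclNorm, Real.sq_sqrt h]

theorem stmt_12 {n : ℕ} (f0 : ℝ) (g : Fin n → ℝ) (H : Matrix (Fin n) (Fin n) ℝ)
    (β σc : ℝ) (hH : H.IsSymm) (hσ : 0 < σc)
    (sc : Fin n → ℝ) (hsc : sc ≠ 0)
    (hstat : (H + ((β / 2) * euclNorm sc) • (1 : Matrix (Fin n) (Fin n) ℝ)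
        + (σc * (euclNorm sc) ^ 2) • (1 : Matrix (Fin n) (Fin n) ℝ)).mulVec sc = -g)
    (hsoc : 0 ≤ sc ⬝ᵥ H.mulVec sc + β * (euclNorm sc) ^ 3 + 3 * σc * (euclNorm sc) ^ 4) :
    -(β / 6) * (euclNorm sc) ^ 3 - (3 / 4) * σc * (euclNorm sc) ^ 4
      ≤ Mc f0 g H β σc 0 - Mc f0 g H β σc sc := by
  set r := euclNorm sc with hr
  have hrr : r ^ 2 = sc ⬝ᵥ sc := euclNorm_sq sc
  have hg : g ⬝ᵥ sc = -(sc ⬝ᵥ H.mulVec sc + (β / 2) * r ^ 3 + σc * r ^ 4) := by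
    have h1 := congrArg (fun v => sc ⬝ᵥ v) hstat
    simp only [add_mulVec, smul_mulVec, one_mulVec, dotProduct_add,
      dotProduct_smul, dotProduct_neg, smul_eq_mul] at h1
    rw [← hrr] at h1
    rw [dotProduct_comm]
    nlinarith [h1]
  have h0 : euclNorm (0 : Fin n → ℝ) = 0 := by simp [euclNorm]
  have hMc : Mc f0 g H β σc 0 - Mc f0 g H β σc sc
      = (1/2) * (sc ⬝ᵥ H.mulVec sc) + (β / 3) * r ^ 3 + (3/4) * σc * r ^ 4 := by
    simp only [Mc, h0, ← hr]
    simp [hg]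
    ring
  rw [hMc]
  nlinarith [hsoc]
end

section
/- Let $m_3(s) = f_0 + g^T s + \tfrac12 H[s]^2 + \tfrac16 T[s]^3 + \tfrac{\sigma}{4}\|s\|^4$ with $\sigma > 0$, and suppose $s_c^{(0)}$ is a global minimizer over $\mathbb{R}^n$ of $M_c(s) = f_0 + g^T s + \tfrac12 H[s]^2 + \tfrac{\beta_0}{6}\|s\|^3 + \tfrac{\sigma}{4}\|s\|^4$ with $|\beta_0| \le B$. Then $\|s_c^{(0)}\| \le \max\big\{\big(\tfrac{12\|g\|}{\sigma}\big)^{1/3}, \big(\tfrac{6\|H\|}{\sigma}\big)^{1/2}, \tfrac{2B}{\sigma}\big\}$, where $\|H\|$ is the spectral norm of $H$. -/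
open Matrix

noncomputable def cube {n : ℕ} (T : Fin n → Fin n → Fin n → ℝ) (s : Fin n → ℝ) : ℝ :=
  ∑ i, ∑ j, ∑ k, T i j k * s i * s j * s k

theorem stmt_19 {n : ℕ} (f0 : ℝ) (g : Fin n → ℝ) (H : Matrix (Fin n) (Fin n) ℝ)
    (T : Fin n → Fin n → Fin n → ℝ) (σ β0 B HN : ℝ)
    (hσ : 0 < σ) (hβ : |β0| ≤ B) (hH : H.IsSymm)
    -- `HN` is the spectral norm of `H`: it bounds the quadratic form
    (hHN : ∀ u : Fin n → ℝ, |u ⬝ᵥ H.mulVec u| ≤ HN * (u ⬝ᵥ u))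
    (sc0 : Fin n → ℝ)
    (hmin : ∀ s : Fin n → ℝ, Mc f0 g H β0 σ sc0 ≤ Mc f0 g H β0 σ s) :
    euclNorm sc0 ≤ max (max ((12 * euclNorm g / σ) ^ ((1 : ℝ) / 3))
        (Real.sqrt (6 * HN / σ))) (2 * B / σ) := by
  by_contra hcon
  push_neg at hcon
  set r := euclNorm sc0 with hr
  have h1 : (12 * euclNorm g / σ) ^ ((1 : ℝ) / 3) < r := lt_of_le_of_lt (le_max_left _ _ |>.trans (le_max_left _ _)) hcon
  have h2 : Real.sqrt (6 * HN / σ) < r := lt_of_le_of_lt (le_max_right _ _ |>.trans (le_max_left _ _)) hcon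
  have h3 : 2 * B / σ < r := lt_of_le_of_lt (le_max_right _ _) hcon
  have hrpos : 0 < r := lt_of_le_of_lt (Real.sqrt_nonneg _) h2
  -- facts about dot products
  have hss : 0 ≤ sc0 ⬝ᵥ sc0 := Finset.sum_nonneg fun i _ => mul_self_nonneg _
  have hgg : 0 ≤ g ⬝ᵥ g := Finset.sum_nonneg fun i _ => mul_self_nonneg _
  have hr2 : r ^ 2 = sc0 ⬝ᵥ sc0 := Real.sq_sqrt hss
  -- Cauchy-Schwarz
  have hCS : |g ⬝ᵥ sc0| ≤ euclNorm g * r := by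
    have hsq : (g ⬝ᵥ sc0) ^ 2 ≤ (g ⬝ᵥ g) * (sc0 ⬝ᵥ sc0) := by
      have := Finset.sum_mul_sq_le_sq_mul_sq Finset.univ g sc0
      simpa [dotProduct, pow_two] using this
    calc |g ⬝ᵥ sc0| = Real.sqrt ((g ⬝ᵥ sc0) ^ 2) := (Real.sqrt_sq_eq_abs _).symm
      _ ≤ Real.sqrt ((g ⬝ᵥ g) * (sc0 ⬝ᵥ sc0)) := Real.sqrt_le_sqrt hsq
      _ = euclNorm g * r := Real.sqrt_mul hgg _
  have hgbd : -(euclNorm g * r) ≤ g ⬝ᵥ sc0 := neg_le_of_abs_le hCS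
  have hHbd : -(HN * r ^ 2) ≤ sc0 ⬝ᵥ H.mulVec sc0 := by
    have := hHN sc0
    rw [← hr2] at this
    exact neg_le_of_abs_le this
  have hβbd : -B ≤ β0 := neg_le_of_abs_le hβ
  -- convert the three strict inequalities
  have hb1 : 12 * euclNorm g / σ < r ^ 3 := by
    have hgn : 0 ≤ euclNorm g := Real.sqrt_nonneg _
    have hb : 0 ≤ 12 * euclNorm g / σ := by positivity
    have h31 : ((12 * euclNorm g / σ) ^ ((1:ℝ)/3)) ^ (3:ℕ) < r ^ (3:ℕ) :=
      pow_lt_pow_left₀ h1 (Real.rpow_nonneg hb _) (by norm_num)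
    have heq : ((12 * euclNorm g / σ) ^ ((1:ℝ)/3)) ^ (3:ℕ) = 12 * euclNorm g / σ := by
      rw [← Real.rpow_natCast ((12 * euclNorm g / σ) ^ ((1:ℝ)/3)) 3, ← Real.rpow_mul hb]
      norm_num
    linarith
  have hb1' : 12 * euclNorm g < σ * r ^ 3 := by
    rw [div_lt_iff₀ hσ] at hb1; linarith
  have hb2 : 6 * HN / σ < r ^ 2 := by
    have := (Real.sqrt_lt' hrpos).mp h2
    linarith
  have hb2' : 6 * HN < σ * r ^ 2 := by
    rw [div_lt_iff₀ hσ] at hb2; linarith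
  have hb3 : 2 * B < σ * r := by
    rw [div_lt_iff₀ hσ] at h3; linarith
  -- minimality at 0
  have h0 : Mc f0 g H β0 σ sc0 ≤ f0 := by
    have := hmin 0
    simpa [Mc, euclNorm, dotProduct, Matrix.mulVec] using this
  have hE : g ⬝ᵥ sc0 + (1/2) * (sc0 ⬝ᵥ H.mulVec sc0) + (β0/6) * r ^ 3 + (σ/4) * r ^ 4 ≤ 0 := by
    have : Mc f0 g H β0 σ sc0 = f0 + (g ⬝ᵥ sc0 + (1/2) * (sc0 ⬝ᵥ H.mulVec sc0) + (β0/6) * r ^ 3 + (σ/4) * r ^ 4) := by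
      simp [Mc]; ring
    linarith [h0, this ▸ h0]
  -- derive contradiction
  have hr2pos : 0 < r ^ 2 := by positivity
  have hr3pos : 0 < r ^ 3 := by positivity
  nlinarith [mul_lt_mul_of_pos_right hb1' hrpos, mul_lt_mul_of_pos_right hb2' hr2pos,
    mul_lt_mul_of_pos_right hb3 hr3pos, mul_le_mul_of_nonneg_right hβbd (le_of_lt hr3pos)]
end
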